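/- Fix an integer d ≥ 2 and let W = {x ∈ ℝ^d : x 1 > |x 0|} be the open right wedge. Let Γ_a, Γ_b ⊆ ℝ^d be compact sets such that Γ_b − Γ_a := {b − a : a ∈ Γ_a, b ∈ Γ_b} ⊆ W. Then there exists δ > 0 such that for every t > 0, all a ∈ Γ_a, b ∈ Γ_b and all w ∈ W, the points t·a and w + t·b are spacelike separated and ‖t·a − (w + t·b)‖ ≥ t·δ, where ‖·‖ is the Euclidean norm on ℝ^d. In other words, the sets t·Γ_a and W + t·Γ_b are spacelike separated and their distance grows at least linearly in t. -/
import Mathlib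


/-- Geometric separation property from Section 3 of the paper: if `Γ_a, Γ_b` are compact
sets with `Γ_b − Γ_a` contained in the open right wedge `W = {x : x₁ > |x₀|}`, then there
is a `δ > 0` such that for all `t > 0` the sets `t·Γ_a` and `W + t·Γ_b` are spacelike
separated and their (Euclidean) distance is at least `t·δ`. -/
theorem precursor_spacelike_separation (d : ℕ) (hd : 2 ≤ d)
    (Ga Gb : Set (EuclideanSpace ℝ (Fin d))) (hGa : IsCompact Ga) (hGb : IsCompact Gb)
    (W : Set (EuclideanSpace ℝ (Fin d)))
    (hW : W = {x | x ⟨1, by omega⟩ > |x ⟨0, by omega⟩|})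
    (hprec : ∀ a ∈ Ga, ∀ b ∈ Gb, b - a ∈ W) :
    ∃ δ : ℝ, 0 < δ ∧ ∀ t : ℝ, 0 < t → ∀ a ∈ Ga, ∀ b ∈ Gb, ∀ w ∈ W,
      ((t • a - (w + t • b)) ⟨0, by omega⟩) ^ 2 <
          (∑ j ∈ Finset.univ.erase (⟨0, by omega⟩ : Fin d),
            ((t • a - (w + t • b)) j) ^ 2) ∧
      ‖t • a - (w + t • b)‖ ≥ t * δ := by
  have h0 : (0 : ℕ) < d := by omega
  have h1 : (1 : ℕ) < d := by omega
  set i0 : Fin d := ⟨0, h0⟩ with hi0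
  set i1 : Fin d := ⟨1, h1⟩ with hi1
  have hne01 : i1 ≠ i0 := by simp [hi0, hi1, Fin.ext_iff]
  by_cases hne : (Ga ×ˢ Gb).Nonempty
  · -- minimize (b-a)₁ - |(b-a)₀| over the compact product
    have hcont : Continuous fun p : EuclideanSpace ℝ (Fin d) × EuclideanSpace ℝ (Fin d) =>
        (p.2 - p.1) i1 - |(p.2 - p.1) i0| := by
      have hsub : Continuous fun p : EuclideanSpace ℝ (Fin d) × EuclideanSpace ℝ (Fin d) =>
          p.2 - p.1 := continuous_snd.sub continuous_fst
      exact (((EuclideanSpace.proj i1).continuous.comp hsub)).sub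
        (((EuclideanSpace.proj i0).continuous.comp hsub)).abs
    obtain ⟨p, hp, hmin⟩ := (hGa.prod hGb).exists_isMinOn hne hcont.continuousOn
    set δ : ℝ := (p.2 - p.1) i1 - |(p.2 - p.1) i0| with hδdef
    have hδpos : 0 < δ := by
      have := hprec p.1 hp.1 p.2 hp.2
      rw [hW] at this
      simpa [hδdef, sub_pos] using this
    refine ⟨δ, hδpos, ?_⟩
    intro t ht a ha b hb w hw
    have hc : δ ≤ (b - a) i1 - |(b - a) i0| :=
      hmin (Set.mk_mem_prod ha hb)
    have hc' : δ ≤ (b i1 - a i1) - |b i0 - a i0| := by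
      simpa [PiLp.sub_apply] using hc
    rw [hW] at hw
    have hw' : w i1 > |w i0| := hw
    have habs0 : |w i0| ≥ 0 := abs_nonneg _
    -- key inequality
    have hkey : |w i0 + t * (b i0 - a i0)| + t * δ ≤ w i1 + t * (b i1 - a i1) := by
      have h1 : |w i0 + t * (b i0 - a i0)| ≤ |w i0| + t * |b i0 - a i0| := by
        calc |w i0 + t * (b i0 - a i0)| ≤ |w i0| + |t * (b i0 - a i0)| := abs_add_le _ _
          _ = |w i0| + t * |b i0 - a i0| := by rw [abs_mul, abs_of_pos ht]
      nlinarith [mul_le_mul_of_nonneg_left hc' ht.le]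
    have habs0' : 0 ≤ |w i0 + t * (b i0 - a i0)| := abs_nonneg _
    have htδ : 0 < t * δ := mul_pos ht hδpos
    have hv1pos : 0 < w i1 + t * (b i1 - a i1) := by linarith
    -- coordinates of the difference vector
    have hvi : ∀ j : Fin d, (t • a - (w + t • b)) j = t * a j - (w j + t * b j) := by
      intro j
      simp [PiLp.sub_apply, PiLp.add_apply, PiLp.smul_apply, smul_eq_mul]
    have hv1 : (t • a - (w + t • b)) i1 = -(w i1 + t * (b i1 - a i1)) := by
      rw [hvi]; ring
    have hv0 : (t • a - (w + t • b)) i0 = -(w i0 + t * (b i0 - a i0)) := by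
      rw [hvi]; ring
    have hsq01 : ((t • a - (w + t • b)) i0) ^ 2 + (t * δ) ^ 2
        ≤ ((t • a - (w + t • b)) i1) ^ 2 := by
      rw [hv0, hv1]
      have h2 : (w i0 + t * (b i0 - a i0)) ^ 2 = |w i0 + t * (b i0 - a i0)| ^ 2 :=
        (sq_abs _).symm
      nlinarith [hkey, habs0', htδ]
    constructor
    · have hsum : ((t • a - (w + t • b)) i1) ^ 2 ≤
          ∑ j ∈ Finset.univ.erase i0, ((t • a - (w + t • b)) j) ^ 2 := by
        apply Finset.single_le_sum (f := fun j => ((t • a - (w + t • b)) j) ^ 2)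
          (fun j _ => sq_nonneg _)
        exact Finset.mem_erase.mpr ⟨hne01, Finset.mem_univ _⟩
      nlinarith [htδ]
    · -- norm bound
      have hnorm : ‖t • a - (w + t • b)‖ =
          Real.sqrt (∑ j, ((t • a - (w + t • b)) j) ^ 2) := by
        rw [EuclideanSpace.norm_eq]
        congr 1
        exact Finset.sum_congr rfl fun j _ => sq_abs _
      have hsum2 : (t * δ) ^ 2 ≤ ∑ j, ((t • a - (w + t • b)) j) ^ 2 := by
        have h3 : ((t • a - (w + t • b)) i1) ^ 2 ≤
            ∑ j, ((t • a - (w + t • b)) j) ^ 2 :=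
          Finset.single_le_sum (f := fun j => ((t • a - (w + t • b)) j) ^ 2)
            (fun j _ => sq_nonneg _) (Finset.mem_univ _)
        nlinarith [sq_nonneg ((t • a - (w + t • b)) i0)]
      rw [hnorm]
      calc t * δ = Real.sqrt ((t * δ) ^ 2) := (Real.sqrt_sq htδ.le).symm
        _ ≤ _ := Real.sqrt_le_sqrt hsum2
  · refine ⟨1, one_pos, ?_⟩
    intro t ht a ha b hb w hw
    exact absurd (Set.mk_mem_prod ha hb) (fun h => hne ⟨(a, b), h⟩)
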